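/- Every function in the class 𝒮*_q is starlike; that is, if f is analytic on the unit disk D with f(0)=0, f'(0)=1, and zf'(z)/f(z) ≺ z + √(1+z²) (principal branch), then zf'(z)/f(z) ≺ (1+z)/(1−z), i.e. Re(zf'(z)/f(z)) > 0 for all z ∈ D. -/

import Mathlib

open Complex Metric

/-- Every function in the class `𝒮*_q` is starlike: if `z f'(z)/f(z)` is
subordinate to `z + √(1+z²)` (principal branch, witnessed by a Schwarz
function), then `z f'(z)/f(z)` is subordinate to `(1+z)/(1−z)` (again
witnessed by a Schwarz function). -/
lemma re_sq (w : ℂ) : (w ^ 2).re = w.re ^ 2 - w.im ^ 2 := by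
  rw [sq, Complex.mul_re]; ring

/-- Key lemma: `Re (w + √(1+w²)) > 0` for `|w| < 1`. -/
lemma re_q_pos {w : ℂ} (hw : ‖w‖ < 1) :
    0 < (w + (1 + w ^ 2) ^ ((1 : ℂ) / 2)).re := by
  have hw2 : w.re ^ 2 + w.im ^ 2 < 1 := by
    have h1 : ‖w‖ ^ 2 < 1 := by nlinarith [norm_nonneg w]
    rw [Complex.sq_norm] at h1; simpa [Complex.normSq_apply, sq] using h1
  set u : ℂ := 1 + w ^ 2 with hu
  have hure : u.re = 1 + w.re ^ 2 - w.im ^ 2 := by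
    simp [hu, Complex.add_re, re_sq]; ring
  have hupos : 0 < u.re := by nlinarith
  have hu0 : u ≠ 0 := by
    intro h; rw [h] at hupos; simp at hupos
  set s : ℂ := u ^ ((1 : ℂ) / 2) with hs
  have hs2 : s ^ 2 = u := by
    have : ((1 : ℂ) / 2) = ((2 : ℕ) : ℂ)⁻¹ := by norm_num
    rw [hs, this, Complex.cpow_nat_inv_pow u (by norm_num)]
  have hsre : 0 < s.re := by
    rw [hs, Complex.cpow_def_of_ne_zero hu0, Complex.exp_re]
    apply mul_pos (Real.exp_pos _)
    apply Real.cos_pos_of_mem_Ioo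
    have harg : |u.arg| < Real.pi / 2 :=
      Complex.abs_arg_lt_pi_div_two_iff.2 (Or.inl hupos)
    have him : (Complex.log u * (1 / 2)).im = u.arg / 2 := by
      simp [Complex.mul_im, Complex.log_im]; ring
    rw [him]
    rcases abs_lt.1 harg with ⟨h1, h2⟩
    constructor <;> [linarith [Real.pi_pos]; linarith [Real.pi_pos]]
  have hres : s.re ^ 2 - s.im ^ 2 = 1 + w.re ^ 2 - w.im ^ 2 := by
    have := congrArg Complex.re hs2
    rw [re_sq] at this; rw [this, hure]
  have hkey : w.re ^ 2 < s.re ^ 2 := by nlinarith [sq_nonneg s.im]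
  simp only [Complex.add_re]
  nlinarith [hkey, hsre, sq_nonneg (w.re + s.re)]

/-- `u` in the slit plane when `0 < u.re` (direct). -/
lemma mem_slit {u : ℂ} (h : 0 < u.re) : u ∈ Complex.slitPlane := Or.inl h

theorem starlike_q_is_starlike
    (f : ℂ → ℂ)
    (hf : DifferentiableOn ℂ f (ball (0 : ℂ) 1))
    (hf0 : f 0 = 0) (hf1 : deriv f 0 = 1)
    (hsub : ∃ ω : ℂ → ℂ, DifferentiableOn ℂ ω (ball (0 : ℂ) 1) ∧ ω 0 = 0 ∧
      (∀ z ∈ ball (0 : ℂ) 1, ω z ∈ ball (0 : ℂ) 1) ∧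
      ∀ z ∈ ball (0 : ℂ) 1,
        z * deriv f z = f z * (ω z + (1 + ω z ^ 2) ^ ((1 : ℂ) / 2))) :
    ∃ ω : ℂ → ℂ, DifferentiableOn ℂ ω (ball (0 : ℂ) 1) ∧ ω 0 = 0 ∧
      (∀ z ∈ ball (0 : ℂ) 1, ω z ∈ ball (0 : ℂ) 1) ∧
      ∀ z ∈ ball (0 : ℂ) 1,
        z * deriv f z * (1 - ω z) = f z * (1 + ω z) := by
  obtain ⟨ω, hωd, hω0, hωb, heq⟩ := hsub
  set p : ℂ → ℂ := fun z => ω z + (1 + ω z ^ 2) ^ ((1 : ℂ) / 2) with hp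
  -- Re p > 0 on the ball
  have hpre : ∀ z ∈ ball (0 : ℂ) 1, 0 < (p z).re := by
    intro z hz
    have : ‖ω z‖ < 1 := by
      simpa [Metric.mem_ball, Complex.dist_eq] using hωb z hz
    exact re_q_pos this
  have hp1 : ∀ z ∈ ball (0 : ℂ) 1, p z + 1 ≠ 0 := by
    intro z hz h
    have h1 : (p z + 1).re = 0 := by rw [h]; simp
    simp only [Complex.add_re, Complex.one_re] at h1
    linarith [hpre z hz]
  -- differentiability of p
  have hpd : ∀ z ∈ ball (0 : ℂ) 1, DifferentiableAt ℂ p z := by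
    intro z hz
    have hball : IsOpen (ball (0 : ℂ) 1) := isOpen_ball
    have hωz : DifferentiableAt ℂ ω z :=
      (hωd z hz).differentiableAt (hball.mem_nhds hz)
    have hbase : DifferentiableAt ℂ (fun z => 1 + ω z ^ 2) z := by
      exact (differentiableAt_const _).add (hωz.pow 2)
    have hslit : (1 + ω z ^ 2) ∈ Complex.slitPlane := by
      apply mem_slit
      have hab : ‖ω z‖ < 1 := by
        simpa [Metric.mem_ball, Complex.dist_eq] using hωb z hz
      have hw2 : (ω z).re ^ 2 + (ω z).im ^ 2 < 1 := by
        have h1 : ‖ω z‖ ^ 2 < 1 := by nlinarith [norm_nonneg (ω z)]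
        rw [Complex.sq_norm] at h1; simpa [Complex.normSq_apply, sq] using h1
      have : (1 + ω z ^ 2).re = 1 + (ω z).re ^ 2 - (ω z).im ^ 2 := by
        simp [Complex.add_re, re_sq]; ring
      rw [this]; nlinarith
    exact hωz.add (hbase.cpow (differentiableAt_const _) hslit)
  refine ⟨fun z => (p z - 1) / (p z + 1), ?_, ?_, ?_, ?_⟩
  · intro z hz
    have : DifferentiableAt ℂ (fun z => (p z - 1) / (p z + 1)) z := by
      exact ((hpd z hz).sub (differentiableAt_const _)).div
        ((hpd z hz).add (differentiableAt_const _)) (hp1 z hz)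
    exact this.differentiableWithinAt
  · have hp0 : p 0 = 1 := by
      simp [hp, hω0, Complex.one_cpow]
    simp [hp0]
  · intro z hz
    simp only [Metric.mem_ball, Complex.dist_eq, sub_zero]
    rw [norm_div]
    rw [div_lt_one (norm_pos_iff.mpr (hp1 z hz))]
    have h1 : ‖p z - 1‖ ^ 2 < ‖p z + 1‖ ^ 2 := by
      rw [Complex.sq_norm, Complex.sq_norm]
      simp only [Complex.normSq_apply, Complex.sub_re, Complex.sub_im,
        Complex.add_re, Complex.add_im, Complex.one_re, Complex.one_im]
      nlinarith [hpre z hz]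
    nlinarith [norm_nonneg (p z - 1), norm_nonneg (p z + 1)]
  · intro z hz
    have hzp := heq z hz
    have hne := hp1 z hz
    rw [hzp]
    field_simp
    ring
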